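/- Fix a real constant α with 1/2 < α < 1. For d ≥ 1 let G = (ℤ/2ℤ)^d, n = 2^d, k = ⌊n^α⌋, and let Pr_n(Diam > 2) be the probability, under the uniform distribution on k-element subsets S of G \ {1}, that some y ∈ G \ {1} satisfies y ∉ S and y ≠ s₁s₂ for all s₁, s₂ ∈ S. Then Pr_n(Diam > 2) → 0 as d → ∞; i.e., the diameter of a random Cayley digraph on an elementary abelian 2-group of order n and degree ⌊n^α⌋ is asymptotically almost surely equal to two. -/

import Mathlib

open Finset Real Filter

open Finset

lemma count_bad {G : Type*} [CommGroup G] [Fintype G] [DecidableEq G]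
    (hsq : ∀ g : G, g * g = 1) (y : G) (hy : y ≠ 1) (k : ℕ) :
    ∃ m : ℕ, 2 * m + 2 = Fintype.card G ∧
      (((Finset.univ.erase (1 : G)).powersetCard k).filter
        (fun S => y ∉ S ∧ ∀ s₁ ∈ S, ∀ s₂ ∈ S, y ≠ s₁ * s₂)).card
        ≤ m.choose k * 2 ^ k := by
  classical
  set e := (Fintype.equivFin G) with he
  set q : G → Finset G := fun s => {s, s * y} with hq
  set A : Finset G := (Finset.univ.erase (1 : G)).erase y with hA
  set P : Finset (Finset G) := A.image q with hP
  set R : Finset G := A.filter (fun s => e s < e (s * y)) with hR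
  have hmemA : ∀ s : G, s ∈ A ↔ s ≠ y ∧ s ≠ 1 := by
    intro s; simp [hA]
  have hmy : ∀ s : G, s * y * y = s := by
    intro s; rw [mul_assoc, hsq, mul_one]
  have hsy_ne : ∀ s : G, s * y ≠ s := by
    intro s h
    have : s * y = s * 1 := by simpa using h
    exact hy (mul_left_cancel this)
  have hclosed : ∀ s : G, s ∈ A → s * y ∈ A := by
    intro s hs
    rw [hmemA] at hs ⊢
    constructor
    · intro h
      exact hs.2 (by
        have : s * y = 1 * y := by simpa using h
        exact mul_right_cancel this)
    · intro h
      apply hs.1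
      have := congrArg (· * y) h
      simpa [hmy] using this
  have hqy : ∀ s : G, q (s * y) = q s := by
    intro s
    simp only [hq, hmy]
    exact Finset.pair_comm _ _
  have hqeq : ∀ s t : G, q t = q s → t = s ∨ t = s * y := by
    intro s t h
    have : t ∈ q s := by rw [← h]; simp [hq]
    simpa [hq] using this
  have hmul : ∀ s : G, s * (s * y) = y := by
    intro s; rw [← mul_assoc, hsq, one_mul]
  -- exactly one of s, s*y is in R
  have hRiff : ∀ s : G, s ∈ A → (s ∈ R ↔ s * y ∉ R) := by
    intro s hs
    have hne : e s ≠ e (s * y) := fun h => hsy_ne s (e.injective h.symm)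
    constructor
    · intro h hsy
      rw [hR, mem_filter] at h hsy
      rw [hmy] at hsy
      exact absurd (lt_trans h.2 hsy.2) (lt_irrefl _)
    · intro h
      rw [hR, mem_filter] at h ⊢
      refine ⟨hs, ?_⟩
      rcases lt_or_gt_of_ne hne with h' | h'
      · exact h'
      · exact absurd ⟨hclosed s hs, by rw [hmy]; exact h'⟩ h
  -- cardinality of P
  have hcardA : 2 * P.card = A.card := by
    rw [Finset.card_eq_sum_card_fiberwise (f := q) (t := P)
      (fun s hs => Finset.mem_image_of_mem q hs)]
    rw [Finset.sum_congr rfl (g := fun _ => 2), Finset.sum_const, smul_eq_mul, mul_comm]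
    intro p hp
    obtain ⟨s, hs, rfl⟩ := Finset.mem_image.mp hp
    have : A.filter (fun t => q t = q s) = {s, s * y} := by
      ext t
      simp only [mem_filter, mem_insert, mem_singleton]
      constructor
      · rintro ⟨ht, hqt⟩; exact hqeq s t hqt
      · rintro (rfl | rfl)
        · exact ⟨hs, rfl⟩
        · exact ⟨hclosed s hs, hqy s⟩
    rw [this, Finset.card_insert_of_notMem (by simpa using hy), Finset.card_singleton]
  have hApos : A.card + 2 = Fintype.card G := by
    have h1 : y ∈ Finset.univ.erase (1 : G) := by simp [hy]
    rw [hA, Finset.card_erase_of_mem h1, Finset.card_erase_of_mem (Finset.mem_univ 1),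
      Finset.card_univ]
    have h2 : 2 ≤ Fintype.card G := by
      have := Finset.one_lt_card_iff.mpr ⟨y, 1, Finset.mem_univ _, Finset.mem_univ _, hy⟩
      simpa [Finset.card_univ, Nat.lt_iff_add_one_le] using this
    omega
  refine ⟨P.card, by omega, ?_⟩
  -- the injection
  set Bad := ((Finset.univ.erase (1 : G)).powersetCard k).filter
      (fun S => y ∉ S ∧ ∀ s₁ ∈ S, ∀ s₂ ∈ S, y ≠ s₁ * s₂) with hBad
  have hSubA : ∀ S ∈ Bad, S ⊆ A := by
    intro S hS
    rw [hBad, mem_filter, Finset.mem_powersetCard] at hS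
    intro s hs
    rw [hmemA]
    refine ⟨fun h => hS.2.1 (h ▸ hs), ?_⟩
    have := hS.1.1 hs
    simp at this
    exact this
  have hqinj : ∀ S ∈ Bad, Set.InjOn q S := by
    intro S hS s hs t ht hqst
    by_contra hne
    rcases hqeq s t hqst.symm with h | h
    · exact hne h.symm
    · rw [hBad, mem_filter] at hS
      exact hS.2.2 s hs t ht (by rw [h, hmul])
  have hcardBad : ∀ S ∈ Bad, S.card = k := by
    intro S hS
    rw [hBad, mem_filter, Finset.mem_powersetCard] at hS
    exact hS.1.2
  set D := (P.powersetCard k).sigma (fun T => T.powerset) with hD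
  have hcardD : D.card = P.card.choose k * 2 ^ k := by
    rw [hD, Finset.card_sigma]
    rw [Finset.sum_congr rfl (g := fun T => 2 ^ k), Finset.sum_const, smul_eq_mul,
      Finset.card_powersetCard]
    intro T hT
    rw [Finset.card_powerset, (Finset.mem_powersetCard.mp hT).2]
  have key : Bad.card ≤ D.card := by
    apply Finset.card_le_card_of_injOn
      (fun S => (⟨S.image q, (S ∩ R).image q⟩ : Σ _ : Finset (Finset G), Finset (Finset G)))
    · intro S hS
      rw [hD, Finset.mem_coe, Finset.mem_sigma]
      constructor
      · rw [Finset.mem_powersetCard]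
        refine ⟨Finset.image_subset_iff.mpr (fun s hs => Finset.mem_image_of_mem q (hSubA S hS hs)), ?_⟩
        rw [Finset.card_image_of_injOn (hqinj S hS), hcardBad S hS]
      · rw [Finset.mem_powerset]
        exact Finset.image_subset_image (Finset.inter_subset_left)
    · intro S₁ hS₁ S₂ hS₂ heq
      simp only [Finset.mem_coe] at hS₁ hS₂
      have h1 : S₁.image q = S₂.image q := congrArg Sigma.fst heq
      have h2 : (S₁ ∩ R).image q = (S₂ ∩ R).image q := by
        have := congrArg Sigma.snd heq
        simpa using this
      clear heq
      have main : ∀ S S' : Finset G, S ∈ Bad → S' ∈ Bad → S.image q = S'.image q →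
          (S ∩ R).image q = (S' ∩ R).image q → S ⊆ S' := by
        intro S S' hS hS' him hrim s hs
        by_cases hsR : s ∈ R
        · have : q s ∈ (S' ∩ R).image q := by
            rw [← hrim]
            exact Finset.mem_image_of_mem q (Finset.mem_inter.mpr ⟨hs, hsR⟩)
          obtain ⟨t, ht, hqt⟩ := Finset.mem_image.mp this
          rcases hqeq s t hqt with rfl | rfl
          · exact (Finset.mem_inter.mp ht).1
          · exact absurd ((Finset.mem_inter.mp ht).2)
              ((hRiff s (hSubA S hS hs)).mp hsR)
        · have : q s ∈ S'.image q := by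
            rw [← him]; exact Finset.mem_image_of_mem q hs
          obtain ⟨t, ht, hqt⟩ := Finset.mem_image.mp this
          rcases hqeq s t hqt with rfl | rfl
          · exact ht
          · -- t = s * y ∈ S', and s*y ∈ R
            have hsyR : s * y ∈ R := by
              by_contra h
              exact hsR ((hRiff s (hSubA S hS hs)).mpr h)
            have : q s ∈ (S ∩ R).image q := by
              rw [hrim, ← hqy s]
              exact Finset.mem_image_of_mem q (Finset.mem_inter.mpr ⟨ht, hsyR⟩)
            obtain ⟨u, hu, hqu⟩ := Finset.mem_image.mp this
            rcases hqeq s u hqu with rfl | rfl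
            · exact absurd (Finset.mem_inter.mp hu).2 hsR
            · rw [hBad, mem_filter] at hS
              exact absurd (hmul s).symm (hS.2.2 s hs (s * y) (Finset.mem_inter.mp hu).1)
      exact Finset.Subset.antisymm (main S₁ S₂ hS₁ hS₂ h1 h2) (main S₂ S₁ hS₂ hS₁ h1.symm h2.symm)
  omega


lemma sum_range_add_one (k : ℕ) :
    ∑ i ∈ Finset.range k, ((i : ℝ) + 1) = k * (k + 1) / 2 := by
  induction k with
  | zero => simp
  | succ n ih => rw [Finset.sum_range_succ, ih]; push_cast; ring

lemma choose_bound (m k : ℕ) :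
    (m.choose k : ℝ) * 2 ^ k
      ≤ ((2 * m + 1).choose k : ℝ)
        * Real.exp (-(k * (k + 1) / 2) / (2 * m + 1)) := by
  by_cases hk : k ≤ m
  · have hNcastpre : ((2 * m + 1 : ℕ) : ℝ) = 2 * (m : ℝ) + 1 := by push_cast; ring
    rw [← hNcastpre]
    set N : ℕ := 2 * m + 1 with hN
    have hNpos : (0 : ℝ) < N := by positivity
    have main : (2 : ℝ) ^ k * ∏ i ∈ Finset.range k, ((m - i : ℕ) : ℝ)
        ≤ (∏ i ∈ Finset.range k, ((N - i : ℕ) : ℝ))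
          * Real.exp (-(k * (k + 1) / 2) / N) := by
      have hs0 : ∑ i ∈ Finset.range k, (((i : ℝ) + 1) / N) = ((k : ℝ) * (k + 1) / 2) / N := by
        rw [← Finset.sum_div, sum_range_add_one]
      have hsum : -((k : ℝ) * (k + 1) / 2) / N
          = ∑ i ∈ Finset.range k, (-(((i : ℝ) + 1) / N)) := by
        rw [Finset.sum_neg_distrib, hs0, neg_div]
      rw [hsum, Real.exp_sum, ← Finset.prod_mul_distrib]
      have h2 : (2 : ℝ) ^ k = ∏ _i ∈ Finset.range k, (2 : ℝ) := by
        rw [Finset.prod_const, Finset.card_range]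
      rw [h2, ← Finset.prod_mul_distrib]
      apply Finset.prod_le_prod
      · intro i _; positivity
      · intro i hi
        have hik : i < k := Finset.mem_range.mp hi
        have him : i ≤ m := le_trans (Nat.le_of_lt_succ (Nat.lt_succ_of_lt hik)) hk
        have hcm : ((m - i : ℕ) : ℝ) = (m : ℝ) - i := by
          rw [Nat.cast_sub him]
        have hiN : i ≤ N := by omega
        have hcN : ((N - i : ℕ) : ℝ) = (N : ℝ) - i := by
          rw [Nat.cast_sub hiN]
        have hexp : 1 - ((i : ℝ) + 1) / N ≤ Real.exp (-(((i : ℝ) + 1) / N)) := by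
          have := Real.add_one_le_exp (-(((i : ℝ) + 1) / N))
          linarith
        have hNval : (N : ℝ) = 2 * m + 1 := by rw [hN]; push_cast; ring
        have hiNR : (i : ℝ) + 1 ≤ N := by
          rw [hNval]
          have : (i : ℝ) ≤ m := by exact_mod_cast him
          linarith
        rw [hcm, hcN]
        have hpos : (0 : ℝ) < (N : ℝ) - i := by linarith
        have key : ((N : ℝ) - i) * (1 - ((i : ℝ) + 1) / N)
            ≤ ((N : ℝ) - i) * Real.exp (-(((i : ℝ) + 1) / N)) := by
          apply mul_le_mul_of_nonneg_left hexp (le_of_lt hpos)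
        have expand : ((N : ℝ) - i) * (1 - ((i : ℝ) + 1) / N)
            = ((N : ℝ) - i) - ((i : ℝ) + 1) * (((N : ℝ) - i) / N) := by
          field_simp <;> ring
        have hfrac : ((N : ℝ) - i) / N ≤ 1 := by
          rw [div_le_one hNpos]; linarith [Nat.cast_nonneg (α := ℝ) i]
        have : ((N : ℝ) - i) - ((i : ℝ) + 1) ≤ ((N : ℝ) - i) - ((i : ℝ) + 1) * (((N : ℝ) - i) / N) := by
          have h1 : ((i : ℝ) + 1) * (((N : ℝ) - i) / N) ≤ ((i : ℝ) + 1) * 1 := by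
            apply mul_le_mul_of_nonneg_left hfrac (by positivity)
          linarith
        calc 2 * ((m : ℝ) - i) = ((N : ℝ) - i) - ((i : ℝ) + 1) := by rw [hNval]; ring
          _ ≤ _ := this
          _ = ((N : ℝ) - i) * (1 - ((i : ℝ) + 1) / N) := expand.symm
          _ ≤ _ := key
    have hdm : (∏ i ∈ Finset.range k, ((m - i : ℕ) : ℝ)) = ((k.factorial : ℝ)) * m.choose k := by
      rw [← Nat.cast_prod, ← Nat.descFactorial_eq_prod_range,
        Nat.descFactorial_eq_factorial_mul_choose]
      push_cast; ring
    have hdN : (∏ i ∈ Finset.range k, ((N - i : ℕ) : ℝ)) = ((k.factorial : ℝ)) * N.choose k := by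
      rw [← Nat.cast_prod, ← Nat.descFactorial_eq_prod_range,
        Nat.descFactorial_eq_factorial_mul_choose]
      push_cast; ring
    rw [hdm, hdN] at main
    have hfac : (0 : ℝ) < (k.factorial : ℝ) := by positivity
    calc (m.choose k : ℝ) * 2 ^ k
        = ((2:ℝ) ^ k * ((k.factorial : ℝ) * m.choose k)) / k.factorial := by
          field_simp <;> ring
      _ ≤ ((k.factorial : ℝ) * N.choose k * Real.exp (-(k * (k + 1) / 2) / N)) / k.factorial := by
          exact div_le_div_of_nonneg_right main hfac.le
      _ = (N.choose k : ℝ) * Real.exp (-(k * (k + 1) / 2) / N) := by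
          field_simp <;> ring
  · rw [Nat.choose_eq_zero_of_lt (by omega)]
    simp
    positivity


lemma tendsto_bound (α : ℝ) (hα1 : 1 / 2 < α) (hα2 : α < 1) :
    Tendsto (fun d : ℕ =>
      (((2 ^ d - 1 : ℕ) : ℝ)) *
        Real.exp (-((⌊((2 ^ d : ℕ) : ℝ) ^ α⌋₊ : ℝ) * ((⌊((2 ^ d : ℕ) : ℝ) ^ α⌋₊ : ℝ) + 1) / 2)
          / ((2 ^ d - 1 : ℕ) : ℝ)))
      atTop (nhds 0) := by
  have hε : (0 : ℝ) < 2 * α - 1 := by linarith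
  set ε : ℝ := 2 * α - 1 with hεdef
  -- the dominating function
  set g : ℕ → ℝ := fun d => ((2 : ℝ) ^ d) * Real.exp (-(1/4) * ((2 : ℝ) ^ d) ^ ε) with hg
  have hu : Tendsto (fun d : ℕ => ((2 : ℝ) ^ d) ^ ε) atTop atTop := by
    apply (tendsto_rpow_atTop hε).comp
    exact tendsto_pow_atTop_atTop_of_one_lt (by norm_num : (1:ℝ) < 2)
  have hgtend : Tendsto g atTop (nhds 0) := by
    have base := tendsto_rpow_mul_exp_neg_mul_atTop_nhds_zero (1 / ε) (1/4) (by norm_num)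
    have := base.comp hu
    apply this.congr
    intro d
    simp only [Function.comp_apply, hg]
    congr 1
    rw [← Real.rpow_natCast (2:ℝ) d, ← Real.rpow_mul (by norm_num : (0:ℝ) ≤ 2),
      ← Real.rpow_mul (by norm_num : (0:ℝ) ≤ 2)]
    congr 1
    field_simp
  apply squeeze_zero' ?_ ?_ hgtend
  · filter_upwards [eventually_ge_atTop 1] with d hd
    positivity
  · filter_upwards [eventually_ge_atTop 4] with d hd
    set nn : ℝ := (2 : ℝ) ^ d with hnn
    have hnn1 : (1 : ℝ) < nn := by
      rw [hnn]
      exact one_lt_pow₀ (by norm_num) (by omega)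
    have hnn0 : (0 : ℝ) < nn := by linarith
    set k : ℕ := ⌊((2 ^ d : ℕ) : ℝ) ^ α⌋₊ with hk
    have hcastn : ((2 ^ d : ℕ) : ℝ) = nn := by rw [hnn]; push_cast; ring
    have hN : ((2 ^ d - 1 : ℕ) : ℝ) = nn - 1 := by
      rw [hnn]
      have : (1:ℕ) ≤ 2 ^ d := Nat.one_le_two_pow
      push_cast [this]
      ring
    have hNpos : (0 : ℝ) < nn - 1 := by linarith
    -- n^α ≥ 4
    have hx4 : (4 : ℝ) ≤ nn ^ α := by
      have h1 : (2:ℝ)^(4:ℕ) ≤ nn := by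
        rw [hnn]
        apply pow_le_pow_right₀ (by norm_num) hd
      have h2 : nn ^ ((1:ℝ)/2) ≤ nn ^ α := by
        apply Real.rpow_le_rpow_of_exponent_le (le_of_lt hnn1) (by linarith)
      have h3 : (4 : ℝ) ≤ nn ^ ((1:ℝ)/2) := by
        have h16 : (16 : ℝ) ≤ nn := by norm_num at h1; linarith
        have : ((16:ℝ)) ^ ((1:ℝ)/2) ≤ nn ^ ((1:ℝ)/2) :=
          Real.rpow_le_rpow (by norm_num) h16 (by norm_num)
        have h16h : ((16:ℝ)) ^ ((1:ℝ)/2) = 4 := by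
          rw [show (16:ℝ) = 4 ^ (2:ℕ) by norm_num, ← Real.rpow_natCast (4:ℝ) 2,
            ← Real.rpow_mul (by norm_num)]
          norm_num
        linarith
      linarith
    -- k ≥ nn^α - 1
    have hkge : nn ^ α - 1 ≤ (k : ℝ) := by
      rw [hk, hcastn]
      have := Nat.lt_floor_add_one (nn ^ α)
      linarith
    have hk0 : (0 : ℝ) ≤ (k : ℝ) := Nat.cast_nonneg k
    -- key exponent inequality : nn^ε/4 ≤ (k*(k+1)/2)/(nn-1)
    have hsq : nn ^ (α + α) = nn ^ α * nn ^ α := Real.rpow_add hnn0 α α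
    have hrpow : nn ^ ε = nn ^ (α + α) / nn := by
      have h := Real.rpow_sub hnn0 (α + α) 1
      rw [Real.rpow_one] at h
      rw [hεdef, show 2 * α - 1 = (α + α) - 1 by ring, h]
    have hkk : nn ^ (α + α) / 4 ≤ (k : ℝ) * ((k : ℝ) + 1) / 2 := by
      have h1 : (nn ^ α - 1) ^ 2 ≤ (k:ℝ) * ((k:ℝ)+1) := by
        nlinarith [hkge, hk0, hx4]
      nlinarith [hsq, hx4]
    have hfrac : nn ^ (α + α) / nn * (nn - 1) ≤ nn ^ (α + α) := by
      rw [div_mul_eq_mul_div, div_le_iff₀ hnn0]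
      nlinarith [Real.rpow_nonneg (le_of_lt hnn0) (α + α)]
    have hexp_le : -((k : ℝ) * ((k : ℝ) + 1) / 2) / (nn - 1) ≤ -(1/4) * nn ^ ε := by
      rw [hrpow, div_le_iff₀ hNpos]
      nlinarith [hfrac, hkk]
    calc ((2 ^ d - 1 : ℕ) : ℝ) * Real.exp (-((k:ℝ) * ((k:ℝ) + 1) / 2) / ((2 ^ d - 1 : ℕ) : ℝ))
        ≤ nn * Real.exp (-(1/4) * nn ^ ε) := by
          rw [hN]
          apply mul_le_mul (by linarith) ?_ (le_of_lt (Real.exp_pos _)) (le_of_lt hnn0)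
          exact Real.exp_le_exp.mpr hexp_le
      _ = g d := by rw [hg]

lemma ratio_bound {G : Type*} [CommGroup G] [Fintype G] [DecidableEq G]
    (hsq : ∀ g : G, g * g = 1) (k m : ℕ)
    (hm : 2 * m + 2 = Fintype.card G) (hk : k ≤ 2 * m + 1) :
    ((((Finset.univ.erase (1 : G)).powersetCard k).filter
        (fun S => ∃ y ∈ Finset.univ.erase (1 : G),
          y ∉ S ∧ ∀ s₁ ∈ S, ∀ s₂ ∈ S, y ≠ s₁ * s₂)).card : ℝ)
      / (((Finset.univ.erase (1 : G)).powersetCard k).card : ℝ)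
      ≤ ((2 * m + 1 : ℕ) : ℝ)
        * Real.exp (-((k : ℝ) * ((k : ℝ) + 1) / 2) / ((2 * m + 1 : ℕ) : ℝ)) := by
  classical
  have hcard_erase : (Finset.univ.erase (1 : G)).card = 2 * m + 1 := by
    rw [Finset.card_erase_of_mem (Finset.mem_univ 1), Finset.card_univ]
    omega
  have hden : ((Finset.univ.erase (1 : G)).powersetCard k).card = (2 * m + 1).choose k := by
    rw [Finset.card_powersetCard, hcard_erase]
  have hdenpos : 0 < (2 * m + 1).choose k := Nat.choose_pos hk
  -- union bound on the numerator
  have hnum : (((Finset.univ.erase (1 : G)).powersetCard k).filter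
        (fun S => ∃ y ∈ Finset.univ.erase (1 : G),
          y ∉ S ∧ ∀ s₁ ∈ S, ∀ s₂ ∈ S, y ≠ s₁ * s₂)).card
      ≤ (2 * m + 1) * (m.choose k * 2 ^ k) := by
    have hsub : (((Finset.univ.erase (1 : G)).powersetCard k).filter
        (fun S => ∃ y ∈ Finset.univ.erase (1 : G),
          y ∉ S ∧ ∀ s₁ ∈ S, ∀ s₂ ∈ S, y ≠ s₁ * s₂))
        ⊆ (Finset.univ.erase (1 : G)).biUnion (fun y =>
          ((Finset.univ.erase (1 : G)).powersetCard k).filter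
            (fun S => y ∉ S ∧ ∀ s₁ ∈ S, ∀ s₂ ∈ S, y ≠ s₁ * s₂)) := by
      intro S hS
      simp only [Finset.mem_filter] at hS
      obtain ⟨hS1, y, hy, hy2⟩ := hS
      exact Finset.mem_biUnion.mpr ⟨y, hy, Finset.mem_filter.mpr ⟨hS1, hy2⟩⟩
    calc _ ≤ _ := Finset.card_le_card hsub
      _ ≤ ∑ y ∈ Finset.univ.erase (1 : G),
            (((Finset.univ.erase (1 : G)).powersetCard k).filter
            (fun S => y ∉ S ∧ ∀ s₁ ∈ S, ∀ s₂ ∈ S, y ≠ s₁ * s₂)).card :=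
          Finset.card_biUnion_le
      _ ≤ ∑ y ∈ Finset.univ.erase (1 : G), m.choose k * 2 ^ k := by
          apply Finset.sum_le_sum
          intro y hy
          obtain ⟨m', hm', hle⟩ := count_bad hsq y (by simpa using (Finset.mem_erase.mp hy).1) k
          have : m' = m := by omega
          rw [← this]
          exact hle
      _ = (2 * m + 1) * (m.choose k * 2 ^ k) := by
          rw [Finset.sum_const, hcard_erase, smul_eq_mul]
  rw [hden, div_le_iff₀ (by exact_mod_cast hdenpos)]
  calc ((((Finset.univ.erase (1 : G)).powersetCard k).filter
        (fun S => ∃ y ∈ Finset.univ.erase (1 : G),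
          y ∉ S ∧ ∀ s₁ ∈ S, ∀ s₂ ∈ S, y ≠ s₁ * s₂)).card : ℝ)
      ≤ ((2 * m + 1 : ℕ) : ℝ) * ((m.choose k : ℝ) * 2 ^ k) := by
        exact_mod_cast hnum
    _ ≤ ((2 * m + 1 : ℕ) : ℝ) * (((2 * m + 1).choose k : ℝ)
          * Real.exp (-((k : ℝ) * ((k : ℝ) + 1) / 2) / ((2 * m + 1 : ℕ) : ℝ))) := by
        apply mul_le_mul_of_nonneg_left ?_ (by positivity)
        have := choose_bound m k
        have hc : ((2 * m + 1 : ℕ) : ℝ) = 2 * (m : ℝ) + 1 := by push_cast; ring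
        rw [hc]
        exact this
    _ = ((2 * m + 1 : ℕ) : ℝ)
          * Real.exp (-((k : ℝ) * ((k : ℝ) + 1) / 2) / ((2 * m + 1 : ℕ) : ℝ))
          * ((2 * m + 1).choose k : ℝ) := by ring

theorem stmt_16 (α : ℝ) (hα1 : 1 / 2 < α) (hα2 : α < 1) :
    Filter.Tendsto
      (fun d : ℕ =>
        let G := Multiplicative (Fin d → ZMod 2)
        let n : ℕ := 2 ^ d
        let k : ℕ := ⌊(n : ℝ) ^ α⌋₊
        ((((Finset.univ.erase (1 : G)).powersetCard k).filter
            (fun S => ∃ y ∈ Finset.univ.erase (1 : G),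
              y ∉ S ∧ ∀ s₁ ∈ S, ∀ s₂ ∈ S, y ≠ s₁ * s₂)).card : ℝ)
          / (((Finset.univ.erase (1 : G)).powersetCard k).card : ℝ))
      Filter.atTop (nhds 0) := by
  apply squeeze_zero' ?_ ?_ (tendsto_bound α hα1 hα2)
  · filter_upwards with d
    exact div_nonneg (Nat.cast_nonneg _) (Nat.cast_nonneg _)
  · filter_upwards [eventually_ge_atTop 1] with d hd
    have hsq : ∀ g : Multiplicative (Fin d → ZMod 2), g * g = 1 := by
      intro g
      change (Multiplicative.toAdd g + Multiplicative.toAdd g : Fin d → ZMod 2) = 0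
      funext i
      exact CharTwo.add_self_eq_zero _
    have hcardG : Fintype.card (Multiplicative (Fin d → ZMod 2)) = 2 ^ d := by
      simp [Fintype.card_pi, ZMod.card]
    have hpow1 : 1 ≤ 2 ^ (d - 1) := Nat.one_le_two_pow
    have hpow2 : 2 ^ (d - 1) * 2 = 2 ^ d := by
      rw [← pow_succ]
      congr 1
      omega
    have hm : 2 * (2 ^ (d - 1) - 1) + 2 = Fintype.card (Multiplicative (Fin d → ZMod 2)) := by
      rw [hcardG]; omega
    have hklt : ⌊((2 ^ d : ℕ) : ℝ) ^ α⌋₊ < 2 ^ d := by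
      rw [Nat.floor_lt (Real.rpow_nonneg (Nat.cast_nonneg _) α)]
      have h1 : (1 : ℝ) < ((2 ^ d : ℕ) : ℝ) := by
        exact_mod_cast Nat.one_lt_two_pow_iff.mpr (by omega)
      calc ((2 ^ d : ℕ) : ℝ) ^ α < ((2 ^ d : ℕ) : ℝ) ^ (1:ℝ) :=
            Real.rpow_lt_rpow_of_exponent_lt h1 hα2
        _ = _ := Real.rpow_one _
    have hk : ⌊((2 ^ d : ℕ) : ℝ) ^ α⌋₊ ≤ 2 * (2 ^ (d - 1) - 1) + 1 := by omega
    have := ratio_bound hsq ⌊((2 ^ d : ℕ) : ℝ) ^ α⌋₊ (2 ^ (d - 1) - 1) hm hk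
    have h21 : 2 * (2 ^ (d - 1) - 1) + 1 = 2 ^ d - 1 := by omega
    rw [h21] at this
    exact this
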